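/- Let K be a field, let V and W be finite-dimensional K-vector spaces, let ℓ : V → W be a bijective K-linear map, and let u : W → V be a K-linear map such that the composition ℓ ∘ u : W → W is bijective. Then there exists a polynomial p ∈ K[X] such that the linear map u ∘ p(ℓ ∘ u) : W → V is a two-sided inverse of ℓ, i.e. ℓ ∘ (u ∘ p(ℓ ∘ u)) = id_W and (u ∘ p(ℓ ∘ u)) ∘ ℓ = id_V. -/

import Mathlib

open Polynomial

theorem aux_inv_poly (K : Type*) [Field K] (W : Type*) [AddCommGroup W] [Module K W]
    [FiniteDimensional K W] (f : Module.End K W) (hf : IsUnit f) :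
    ∃ p : K[X], aeval f p * f = 1 ∧ f * aeval f p = 1 := by
  have hint : IsIntegral K f := Algebra.IsIntegral.isIntegral f
  by_cases hs : Subsingleton (Module.End K W)
  · exact ⟨0, Subsingleton.elim _ _, Subsingleton.elim _ _⟩
  have hnt : Nontrivial (Module.End K W) := not_subsingleton_iff_nontrivial.mp hs
  set m := minpoly K f with hm
  have hm0 : m ≠ 0 := minpoly.ne_zero hint
  have hdeg : 0 < m.natDegree := minpoly.natDegree_pos hint
  set c := m.coeff 0 with hc
  set g := aeval f (divX m) with hg
  have hsplit : divX m * X + C c = m := m.divX_mul_X_add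
  have h1 : aeval f (divX m * X + C c) = 0 := by rw [hsplit]; exact minpoly.aeval K f
  rw [map_add, map_mul, aeval_X, aeval_C] at h1
  have hgf : g * f = -(algebraMap K _ c) := by
    rw [← hg] at h1; exact eq_neg_of_add_eq_zero_left h1
  have hfg : f * g = -(algebraMap K _ c) := by
    have h2 : aeval f (X * divX m) = g * f := by
      rw [mul_comm, map_mul, aeval_X, hg]
    rw [map_mul, aeval_X, hg] at h2
    rw [h2, hgf]
  have hcne : c ≠ 0 := by
    intro h
    rw [h, map_zero, neg_zero] at hgf
    have hgz : g = 0 := by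
      obtain ⟨v, hv⟩ := hf
      have hv1 : f * ↑v⁻¹ = 1 := by rw [← hv]; exact v.mul_inv
      calc g = g * (f * ↑v⁻¹) := by rw [hv1, mul_one]
        _ = g * f * ↑v⁻¹ := by rw [mul_assoc]
        _ = 0 := by rw [hgf, zero_mul]
    have hdvd := minpoly.dvd K f hgz
    have hdX : divX m ≠ 0 := by
      intro h0
      rw [h0, h, zero_mul, map_zero, add_zero] at hsplit
      exact hm0 hsplit.symm
    have hle := Polynomial.natDegree_le_of_dvd hdvd hdX
    rw [← hm] at hle
    have h2 : (divX m).natDegree < m.natDegree := by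
      rw [natDegree_divX_eq_natDegree_tsub_one]; omega
    omega
  refine ⟨C (-c⁻¹) * divX m, ?_, ?_⟩
  · rw [map_mul, aeval_C, ← hg, mul_assoc, Algebra.algebraMap_eq_smul_one,
      smul_mul_assoc, one_mul, hgf, Algebra.algebraMap_eq_smul_one, smul_neg,
      neg_smul, neg_neg, smul_smul, inv_mul_cancel₀ hcne, one_smul]
  · rw [map_mul, aeval_C, ← hg, Algebra.algebraMap_eq_smul_one, smul_mul_assoc,
      one_mul, mul_smul_comm, hfg, Algebra.algebraMap_eq_smul_one, smul_neg,
      neg_smul, neg_neg, smul_smul, inv_mul_cancel₀ hcne, one_smul]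

/-- If ℓ : V → W is bijective linear, u : W → V is linear and ℓ ∘ u is bijective,
then u composed with a polynomial in ℓ ∘ u is a two-sided inverse of ℓ
(the linear-algebra content of Lemma 2.2 of the paper). -/
theorem inverse_via_correspondence
    (K : Type*) [Field K] (V W : Type*) [AddCommGroup V] [Module K V]
    [AddCommGroup W] [Module K W] [FiniteDimensional K V] [FiniteDimensional K W]
    (ℓ : V →ₗ[K] W) (u : W →ₗ[K] V)
    (hℓ : Function.Bijective ℓ) (hℓu : Function.Bijective (ℓ ∘ₗ u)) :
    ∃ p : Polynomial K,
      ℓ ∘ₗ (u ∘ₗ (Polynomial.aeval (ℓ ∘ₗ u : Module.End K W) p : W →ₗ[K] W))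
        = LinearMap.id ∧
      (u ∘ₗ (Polynomial.aeval (ℓ ∘ₗ u : Module.End K W) p : W →ₗ[K] W)) ∘ₗ ℓ
        = LinearMap.id := by
  set f : Module.End K W := ℓ ∘ₗ u with hf
  have hunit : IsUnit f := by
    rw [Module.End.isUnit_iff]; exact hℓu
  obtain ⟨p, hpf, hfp⟩ := aux_inv_poly K W f hunit
  have key : ℓ ∘ₗ (u ∘ₗ (aeval f p : W →ₗ[K] W)) = LinearMap.id := by
    have : f * aeval f p = 1 := hfp
    calc ℓ ∘ₗ (u ∘ₗ (aeval f p : W →ₗ[K] W)) = (ℓ ∘ₗ u) ∘ₗ (aeval f p : W →ₗ[K] W) := by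
          rw [LinearMap.comp_assoc]
      _ = LinearMap.id := this
  refine ⟨p, key, ?_⟩
  have : ℓ ∘ₗ ((u ∘ₗ (aeval f p : W →ₗ[K] W)) ∘ₗ ℓ) = ℓ ∘ₗ LinearMap.id := by
    rw [← LinearMap.comp_assoc, key, LinearMap.id_comp, LinearMap.comp_id]
  exact (LinearMap.cancel_left hℓ.injective).mp this
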